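/- For every θ ∈ ℚ ∪ {∞} there exists a tiling system τ with Sl_τ = {θ}. -/

import Mathlib

/-- A finite pattern: a finite support in `ℤ²` together with tile data. -/
structure Pattern (T : Type) where
  support : Finset (ℤ × ℤ)
  data : ℤ × ℤ → T

/-- A tiling system: a finite set of finite forbidden patterns over the tile set `T`. -/
structure TilingSystem (T : Type) where
  F : Set (Pattern T)
  finite : F.Finite

/-- A tiling is valid when no translate of a forbidden pattern appears in it. -/
def TilingSystem.Valid {T : Type} (τ : TilingSystem T) (c : ℤ × ℤ → T) : Prop :=
  ∀ p ∈ τ.F, ∀ u : ℤ × ℤ, ∃ n ∈ p.support, c (n + u) ≠ p.data n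

/-- A vector `v` is a period of the tiling `c`. -/
def IsPeriod {T : Type} (c : ℤ × ℤ → T) (v : ℤ × ℤ) : Prop :=
  ∀ x : ℤ × ℤ, c (x + v) = c x

/-- The direction of a vector of `ℤ²`, an element of `ℚ ∪ {∞}` modelled as `Option ℚ`
(`none` being `∞`, obtained when the first coordinate vanishes). -/
def dir (v : ℤ × ℤ) : Option ℚ :=
  if v.1 = 0 then none else some ((v.2 : ℚ) / (v.1 : ℚ))

/-- A tiling has slope `θ` when it has a nonzero period and all its nonzero
periods have direction `θ`. -/
def HasSlope {T : Type} (c : ℤ × ℤ → T) (θ : Option ℚ) : Prop :=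
  (∃ v : ℤ × ℤ, v ≠ 0 ∧ IsPeriod c v ∧ dir v = θ) ∧
    ∀ v : ℤ × ℤ, v ≠ 0 → IsPeriod c v → dir v = θ

/-- The set of slopes of all valid tilings of a tiling system. -/
def TilingSystem.Slopes {T : Type} (τ : TilingSystem T) : Set (Option ℚ) :=
  {θ : Option ℚ | ∃ c : ℤ × ℤ → T, τ.Valid c ∧ HasSlope c θ}

/-! ### Auxiliary constructions -/

/-- The pattern with value `a` at the origin and `b` at `v`. -/
def pat (v : ℤ × ℤ) (a b : Fin 2) : Pattern (Fin 2) :=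
  ⟨{0, v}, fun n => if n = 0 then a else b⟩

/-- The tiling system forbidding a mismatch across the vector `v`. -/
def sys (v : ℤ × ℤ) : TilingSystem (Fin 2) :=
  ⟨{pat v 0 1, pat v 1 0}, (Set.finite_singleton _).insert _⟩

lemma fin2 (x : Fin 2) : x = 0 ∨ x = 1 := by omega

lemma valid_iff (v : ℤ × ℤ) (hv : v ≠ 0) (c : ℤ × ℤ → Fin 2) :
    (sys v).Valid c ↔ IsPeriod c v := by
  constructor
  · intro H x
    have h01 := H (pat v 0 1) (Set.mem_insert _ _) x
    have h10 := H (pat v 1 0) (Set.mem_insert_of_mem _ rfl) x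
    have key : ∀ a b : Fin 2, (∃ n ∈ (pat v a b).support, c (n + x) ≠ (pat v a b).data n) →
        c x = a → c (x + v) ≠ b := by
      intro a b ⟨n, hn, hne⟩ hca hcb
      simp only [pat, Finset.mem_insert, Finset.mem_singleton] at hn
      rcases hn with rfl | rfl
      · simp only [pat, if_pos rfl, zero_add] at hne; exact hne hca
      · simp only [pat, if_neg hv] at hne
        exact hne (by rw [add_comm] at hcb; exact hcb)
    rcases fin2 (c x) with h | h
    · rcases fin2 (c (x + v)) with h' | h' <;> rw [h, h']
      exact absurd h' (key 0 1 h01 h)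
    · rcases fin2 (c (x + v)) with h' | h' <;> rw [h, h']
      exact absurd h' (key 1 0 h10 h)
  · intro H P hP u
    have mem0 : (0 : ℤ × ℤ) ∈ ({0, v} : Finset (ℤ × ℤ)) := Finset.mem_insert_self _ _
    have memv : v ∈ ({0, v} : Finset (ℤ × ℤ)) :=
      Finset.mem_insert_of_mem (Finset.mem_singleton_self _)
    rcases hP with rfl | hP
    · by_cases hcu : c u = 0
      · refine ⟨v, memv, ?_⟩
        simp only [pat, if_neg hv]
        rw [add_comm, H u, hcu]; decide
      · exact ⟨0, mem0, by simpa [pat] using hcu⟩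
    · rw [Set.mem_singleton_iff] at hP; subst hP
      by_cases hcu : c u = 1
      · refine ⟨v, memv, ?_⟩
        simp only [pat, if_neg hv]
        rw [add_comm, H u, hcu]; decide
      · exact ⟨0, mem0, by simpa [pat] using hcu⟩

lemma ker_g (p q w1 w2 : ℤ) (hw : p * w1 - q * w2 = 1) (u : ℤ × ℤ)
    (h : p * u.1 - q * u.2 = 0) : ∃ t : ℤ, u = (t * q, t * p) := by
  refine ⟨w1 * u.2 - w2 * u.1, Prod.ext ?_ ?_⟩
  · show u.1 = _; linear_combination w1 * h - u.1 * hw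
  · show u.2 = _; linear_combination w2 * h - u.2 * hw

lemma main_lemma (p q w1 w2 : ℤ) (hw : p * w1 - q * w2 = 1) (θ : Option ℚ)
    (hdir : ∀ t : ℤ, t ≠ 0 → dir (t * q, t * p) = θ) :
    ∃ (N : ℕ) (τ : TilingSystem (Fin N)), τ.Slopes = {θ} := by
  set v : ℤ × ℤ := (q, p) with hv_def
  have hv : v ≠ 0 := by
    intro h
    rw [Prod.ext_iff] at h
    obtain ⟨h1, h2⟩ := h
    simp only [hv_def] at h1 h2
    rw [h1, h2] at hw; simp at hw
  have hdirv : dir v = θ := by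
    have := hdir 1 one_ne_zero
    simpa using this
  -- the half-plane tiling
  set c0 : ℤ × ℤ → Fin 2 := fun u => if 0 ≤ p * u.1 - q * u.2 then 1 else 0 with hc0
  have hg_add : ∀ x u : ℤ × ℤ, p * (x + u).1 - q * (x + u).2 =
      (p * x.1 - q * x.2) + (p * u.1 - q * u.2) := by
    intro x u
    simp only [Prod.fst_add, Prod.snd_add]; ring
  have hper : IsPeriod c0 v := by
    intro x
    simp only [hc0]
    congr 1
    rw [hg_add]
    simp only [hv_def]; ring_nf
  have hslope : HasSlope c0 θ := by
    constructor
    · exact ⟨v, hv, hper, hdirv⟩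
    · intro u hu hpu
      set k : ℤ := p * u.1 - q * u.2 with hk
      have eval : ∀ m : ℤ, c0 ((m * w1, m * w2) + u) = c0 ((m * w1, m * w2)) := by
        intro m; exact hpu (m * w1, m * w2)
      have hgm : ∀ m : ℤ, p * (m * w1) - q * (m * w2) = m := by
        intro m; linear_combination m * hw
      have h1 : (0 : ℤ) ≤ -k := by
        have := eval (-k)
        simp only [hc0, hg_add] at this
        rw [hgm (-k)] at this
        rw [← hk] at this
        simp only [neg_add_cancel, le_refl, if_pos] at this
        by_contra hneg
        rw [if_neg hneg] at this
        exact absurd this (by decide)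
      have h2 : ¬ (0 : ℤ) ≤ -k - 1 := by
        have := eval (-k - 1)
        simp only [hc0, hg_add] at this
        rw [hgm (-k - 1)] at this
        rw [← hk] at this
        have harith : -k - 1 + k = -1 := by ring
        rw [harith] at this
        simp only [show ¬ (0:ℤ) ≤ -1 by decide, if_false] at this
        by_contra hpos
        rw [if_pos hpos] at this
        exact absurd this (by decide)
      have hk0 : k = 0 := by omega
      obtain ⟨t, ht⟩ := ker_g p q w1 w2 hw u hk0
      have ht0 : t ≠ 0 := by
        intro h; apply hu; rw [ht, h]; simp
      rw [ht]; exact hdir t ht0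
  refine ⟨2, sys v, ?_⟩
  ext θ'
  simp only [TilingSystem.Slopes, Set.mem_setOf_eq, Set.mem_singleton_iff]
  constructor
  · rintro ⟨c, hvalid, hs⟩
    have hpc : IsPeriod c v := (valid_iff v hv c).mp hvalid
    have := hs.2 v hv hpc
    rw [hdirv] at this; exact this.symm
  · rintro rfl
    exact ⟨c0, (valid_iff v hv c0).mpr hper, hslope⟩

/-- For every `θ ∈ ℚ ∪ {∞}` there is a tiling system whose set of slopes is `{θ}`. -/
theorem singleton_slope (θ : Option ℚ) :
    ∃ (N : ℕ) (τ : TilingSystem (Fin N)), τ.Slopes = {θ} := by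
  match θ with
  | none =>
      refine main_lemma 1 0 1 0 (by ring) none ?_
      intro t ht
      simp [dir]
  | some r =>
      have hcop : IsCoprime (r.num) (r.den : ℤ) := by
        rw [Int.isCoprime_iff_gcd_eq_one]
        exact r.reduced
      obtain ⟨a, b, hab⟩ := hcop
      refine main_lemma r.num r.den a (-b) (by linarith [hab]) (some r) ?_
      intro t ht
      have hden : (r.den : ℤ) ≠ 0 := Int.natCast_ne_zero.mpr r.den_nz
      have h1 : t * (r.den : ℤ) ≠ 0 := mul_ne_zero ht hden
      simp only [dir, h1, if_neg h1, if_false]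
      congr 1
      push_cast
      rw [mul_div_mul_left _ _ (by exact_mod_cast ht : (t:ℚ) ≠ 0)]
      exact Rat.num_div_den r
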